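/- Let W ~ ABSN(α,β) with density g(w) = [(1−αw−βw³)²+1]φ(w)/(2+α²+6αβ+15β²), X ~ N(0,1) independent. Then the conditional distribution of W given {λW > X} has density f(z) = [(1−αz−βz³)²+1]φ(z)Φ(λz)/C(α,β,λ), i.e., is GABSN(α,β,λ). -/

import Mathlib

open Real MeasureTheory Filter
open Topology

/-- standard normal pdf -/
noncomputable def phi (z : ℝ) : ℝ := (Real.sqrt (2 * Real.pi))⁻¹ * Real.exp (-z ^ 2 / 2)

/-- standard normal cdf -/
noncomputable def Phi (z : ℝ) : ℝ := ∫ t in Set.Iic z, phi t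

noncomputable def bconst : ℝ := Real.sqrt (2 / Real.pi)

noncomputable def del (l : ℝ) : ℝ := l / Real.sqrt (1 + l ^ 2)

/-- GABSN normalizing constant -/
noncomputable def C (a β l : ℝ) : ℝ :=
  1 + 3 * a * β - a * bconst * del l - β * bconst * del l * (3 + 2 * l ^ 2) / (1 + l ^ 2)
    + a ^ 2 / 2 + 15 * β ^ 2 / 2

/-- GABSN density -/
noncomputable def f (a β l z : ℝ) : ℝ :=
  (((1 - a * z - β * z ^ 3) ^ 2 + 1) * phi z * Phi (l * z)) / C a β l

/-- ABSN density -/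
noncomputable def g (a β w : ℝ) : ℝ :=
  (((1 - a * w - β * w ^ 3) ^ 2 + 1) * phi w) / (2 + a ^ 2 + 6 * a * β + 15 * β ^ 2)


lemma phi_nonneg (z : ℝ) : 0 ≤ phi z := by
  unfold phi; positivity

lemma phi_pos (z : ℝ) : 0 < phi z := by
  unfold phi
  have : (0:ℝ) < Real.sqrt (2 * Real.pi) := Real.sqrt_pos.2 (by positivity)
  positivity

lemma continuous_phi : Continuous phi := by
  unfold phi; fun_prop

lemma phi_neg (z : ℝ) : phi (-z) = phi z := by simp [phi]

lemma integrable_phi : Integrable phi := by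
  have h := integrable_exp_neg_mul_sq (b := (1/2:ℝ)) (by norm_num)
  have h2 : (fun x : ℝ => Real.exp (-(1/2) * x ^ 2)) = fun x => Real.exp (-x ^ 2 / 2) := by
    funext x; ring_nf
  rw [h2] at h
  exact h.const_mul _

lemma integral_phi : ∫ w, phi w = 1 := by
  unfold phi
  rw [integral_const_mul]
  have h2 : (fun x : ℝ => Real.exp (-x ^ 2 / 2)) = fun x => Real.exp (-(1/2) * x ^ 2) := by
    funext x; ring_nf
  rw [h2, integral_gaussian]
  rw [show π / (1/2) = 2 * π by ring]
  rw [inv_mul_cancel₀ (by positivity : Real.sqrt (2*π) ≠ 0)]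

lemma integrable_pow_phi (n : ℕ) : Integrable (fun w : ℝ => w ^ n * phi w) := by
  have h := integrable_rpow_mul_exp_neg_mul_sq (b := (1/2:ℝ)) (by norm_num)
    (s := (n:ℝ)) (lt_of_lt_of_le (by norm_num) (Nat.cast_nonneg n))
  have h2 : (fun x : ℝ => x ^ (n:ℝ) * Real.exp (-(1/2) * x ^ 2))
      = fun x => x ^ n * Real.exp (-x ^ 2 / 2) := by
    funext x; rw [Real.rpow_natCast]; ring_nf
  rw [h2] at h
  have := h.const_mul (Real.sqrt (2 * Real.pi))⁻¹
  apply this.congr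
  filter_upwards with x
  unfold phi; ring

lemma integrableOn_phi (s : Set ℝ) : IntegrableOn phi s := integrable_phi.integrableOn

lemma Phi_nonneg (z : ℝ) : 0 ≤ Phi z :=
  setIntegral_nonneg measurableSet_Iic (fun y _ => phi_nonneg y)

lemma Phi_le_one (z : ℝ) : Phi z ≤ 1 := by
  rw [← integral_phi]
  exact setIntegral_le_integral integrable_phi (Filter.Eventually.of_forall phi_nonneg)

lemma Phi_eq (z : ℝ) : Phi z = Phi 0 + ∫ t in (0:ℝ)..z, phi t := by
  rw [intervalIntegral.integral_Iic_sub_Iic (integrableOn_phi _) (integrableOn_phi _) |>.symm]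
  unfold Phi; ring

lemma hasDerivAt_Phi (x : ℝ) : HasDerivAt Phi (phi x) x := by
  have h : HasDerivAt (fun z => ∫ t in (0:ℝ)..z, phi t) (phi x) x := by
    apply intervalIntegral.integral_hasDerivAt_right
    · exact integrable_phi.intervalIntegrable
    · exact continuous_phi.stronglyMeasurable.stronglyMeasurableAtFilter
    · exact continuous_phi.continuousAt
  have : Phi = fun z => Phi 0 + ∫ t in (0:ℝ)..z, phi t := funext Phi_eq
  rw [this]
  exact h.const_add _

lemma continuous_Phi : Continuous Phi :=
  continuous_iff_continuousAt.2 fun x => (hasDerivAt_Phi x).continuousAt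

lemma Phi_neg (x : ℝ) : Phi (-x) = 1 - Phi x := by
  have h1 : Phi x + ∫ t in Set.Ioi x, phi t = 1 := by
    unfold Phi
    rw [intervalIntegral.integral_Iic_add_Ioi (integrableOn_phi _) (integrableOn_phi _), integral_phi]
  have h2 : Phi (-x) = ∫ t in Set.Ioi x, phi t := by
    unfold Phi
    rw [← integral_comp_neg_Ioi]
    refine setIntegral_congr_fun measurableSet_Ioi (fun t _ => phi_neg t)
  linarith

lemma tendsto_Phi_atTop : Tendsto Phi atTop (𝓝 1) := by
  have h : Tendsto (fun z => ∫ t in (0:ℝ)..z, phi t) atTop (𝓝 (∫ t in Set.Ioi 0, phi t)) :=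
    intervalIntegral_tendsto_integral_Ioi 0 (integrableOn_phi _) tendsto_id
  have h2 : Tendsto (fun z => Phi 0 + ∫ t in (0:ℝ)..z, phi t) atTop
      (𝓝 (Phi 0 + ∫ t in Set.Ioi 0, phi t)) := tendsto_const_nhds.add h
  have h3 : Phi 0 + ∫ t in Set.Ioi 0, phi t = 1 := by
    unfold Phi; rw [intervalIntegral.integral_Iic_add_Ioi (integrableOn_phi _) (integrableOn_phi _),
      integral_phi]
  rw [h3] at h2
  exact h2.congr (fun z => (Phi_eq z).symm)

lemma tendsto_Phi_atBot : Tendsto Phi atBot (𝓝 0) := by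
  have h : Tendsto (fun z => ∫ t in z..(0:ℝ), phi t) atBot (𝓝 (∫ t in Set.Iic 0, phi t)) :=
    intervalIntegral_tendsto_integral_Iic 0 (integrableOn_phi _) tendsto_id
  have h2 : Tendsto (fun z => Phi 0 - ∫ t in z..(0:ℝ), phi t) atBot
      (𝓝 (Phi 0 - ∫ t in Set.Iic 0, phi t)) := tendsto_const_nhds.sub h
  have h3 : Phi 0 - ∫ t in Set.Iic 0, phi t = 0 := by unfold Phi; ring
  rw [h3] at h2
  refine h2.congr (fun z => ?_)
  rw [Phi_eq z, intervalIntegral.integral_symm]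
  ring

lemma tendsto_exp_poly_aux (k : ℕ) :
    Tendsto (fun v : ℝ => v ^ k * Real.exp (-v / 2)) atTop (𝓝 0) := by
  have h := tendsto_pow_mul_exp_neg_atTop_nhds_zero k
  have h2 : Tendsto (fun v : ℝ => v / 2) atTop atTop := tendsto_id.atTop_div_const (by norm_num)
  have h3 := (h.comp h2).const_mul ((2:ℝ) ^ k)
  rw [mul_zero] at h3
  refine h3.congr (fun v => ?_)
  simp only [Function.comp_apply]
  rw [div_pow]
  field_simp

lemma tendsto_abs_pow_phi_atTop (k : ℕ) :
    Tendsto (fun w : ℝ => |w| ^ k * phi w) atTop (𝓝 0) := by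
  have h2 : Tendsto (fun w : ℝ => w ^ 2) atTop atTop := tendsto_pow_atTop two_ne_zero
  have h3 := (tendsto_exp_poly_aux k).comp h2
  have h4 := h3.const_mul ((Real.sqrt (2 * Real.pi))⁻¹)
  rw [mul_zero] at h4
  apply tendsto_of_tendsto_of_tendsto_of_le_of_le' tendsto_const_nhds h4
  · filter_upwards with w
    have := phi_nonneg w
    positivity
  · filter_upwards [eventually_ge_atTop (1:ℝ)] with w hw
    unfold phi
    have hw0 : (0:ℝ) ≤ w := le_trans zero_le_one hw
    rw [abs_of_nonneg hw0]
    simp only [Function.comp_apply]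
    rw [show -w^2/2 = -(w^2)/2 by ring]
    have : w ^ k ≤ (w ^ 2) ^ k := pow_le_pow_left₀ hw0 (by nlinarith) k
    have he : (0:ℝ) < Real.exp (-(w^2)/2) := Real.exp_pos _
    have hs : (0:ℝ) ≤ (Real.sqrt (2 * Real.pi))⁻¹ := by positivity
    nlinarith [mul_le_mul_of_nonneg_right this he.le]

lemma tendsto_abs_pow_phi_atBot (k : ℕ) :
    Tendsto (fun w : ℝ => |w| ^ k * phi w) atBot (𝓝 0) := by
  have := (tendsto_abs_pow_phi_atTop k).comp tendsto_neg_atBot_atTop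
  refine this.congr (fun w => ?_)
  simp [Function.comp_apply, abs_neg, phi_neg]

lemma abs_Phi_le (x : ℝ) : ‖Phi x‖ ≤ 1 := by
  rw [Real.norm_eq_abs, abs_of_nonneg (Phi_nonneg x)]; exact Phi_le_one x

lemma integrable_mul_Phi {p : ℝ → ℝ} (hp : Integrable (fun w => p w * phi w)) (l : ℝ) :
    Integrable (fun w => p w * phi w * Phi (l * w)) := by
  have hm : AEStronglyMeasurable (fun w : ℝ => Phi (l * w)) volume :=
    (continuous_Phi.comp (continuous_const.mul continuous_id)).aestronglyMeasurable
  have h := hp.bdd_mul hm (c := 1) (Filter.Eventually.of_forall fun x => abs_Phi_le _)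
  exact h.congr (Filter.Eventually.of_forall (fun w => by ring))

lemma integral_phi_mul_Phi (l : ℝ) : ∫ w, phi w * Phi (l * w) = 1 / 2 := by
  have hint : Integrable (fun w => phi w * Phi (l * w)) := by
    have := integrable_mul_Phi (p := fun _ => 1) (by simpa using integrable_phi) l
    simpa using this
  have h1 : ∫ w, phi w * Phi (l * w) = ∫ w, phi w * (1 - Phi (l * w)) := by
    rw [← integral_neg_eq_self (fun w => phi w * Phi (l * w)) volume]
    congr 1
    funext w
    rw [phi_neg, show l * -w = -(l*w) by ring, Phi_neg]
  have h2 : ∫ w, phi w * (1 - Phi (l * w)) = 1 - ∫ w, phi w * Phi (l * w) := by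
    have : (fun w => phi w * (1 - Phi (l * w))) = fun w => phi w - phi w * Phi (l * w) := by
      funext w; ring
    rw [this, integral_sub integrable_phi hint, integral_phi]
  rw [h2] at h1
  linarith

lemma hasDerivAt_phi (x : ℝ) : HasDerivAt phi (-x * phi x) x := by
  unfold phi
  have h1 : HasDerivAt (fun z : ℝ => -z ^ 2 / 2) (-x) x := by
    have := ((hasDerivAt_pow 2 x).neg).div_const 2
    refine this.congr_deriv ?_
    ring
  have h2 := (h1.exp).const_mul (Real.sqrt (2 * Real.pi))⁻¹
  refine h2.congr_deriv ?_
  ring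

lemma hasDerivAt_poly (c0 c1 c2 c3 c4 c5 : ℝ) (w : ℝ) :
    HasDerivAt (fun x : ℝ => c0 + c1 * x + c2 * x^2 + c3 * x^3 + c4 * x^4 + c5 * x^5)
      (c1 + 2*c2*w + 3*c3*w^2 + 4*c4*w^3 + 5*c5*w^4) w := by
  have h : HasDerivAt (fun x : ℝ => c0 + c1 * x + c2 * x^2 + c3 * x^3 + c4 * x^4 + c5 * x^5)
      (0 + c1 * 1 + c2 * (2 * w^1) + c3 * (3 * w^2) + c4 * (4 * w^3) + c5 * (5 * w^4)) w := by
    exact ((((((hasDerivAt_const w c0).add ((hasDerivAt_id w).const_mul c1)).add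
      ((hasDerivAt_pow 2 w).const_mul c2)).add ((hasDerivAt_pow 3 w).const_mul c3)).add
      ((hasDerivAt_pow 4 w).const_mul c4)).add ((hasDerivAt_pow 5 w).const_mul c5))
  convert h using 1
  norm_num
  ring

lemma abs_poly_le (c0 c1 c2 c3 c4 c5 w : ℝ) :
    |c0 + c1*w + c2*w^2 + c3*w^3 + c4*w^4 + c5*w^5|
      ≤ |c0| + |c1| * |w| + |c2| * |w|^2 + |c3| * |w|^3 + |c4| * |w|^4 + |c5| * |w|^5 := by
  have h1 : |c0 + c1*w + c2*w^2 + c3*w^3 + c4*w^4 + c5*w^5|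
      ≤ |c0| + |c1*w| + |c2*w^2| + |c3*w^3| + |c4*w^4| + |c5*w^5| := by
    calc |c0 + c1*w + c2*w^2 + c3*w^3 + c4*w^4 + c5*w^5|
        ≤ |c0 + c1*w + c2*w^2 + c3*w^3 + c4*w^4| + |c5*w^5| := abs_add_le _ _
      _ ≤ |c0 + c1*w + c2*w^2 + c3*w^3| + |c4*w^4| + |c5*w^5| := by
          gcongr; exact abs_add_le _ _
      _ ≤ |c0 + c1*w + c2*w^2| + |c3*w^3| + |c4*w^4| + |c5*w^5| := by
          gcongr; exact abs_add_le _ _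
      _ ≤ |c0 + c1*w| + |c2*w^2| + |c3*w^3| + |c4*w^4| + |c5*w^5| := by
          gcongr; exact abs_add_le _ _
      _ ≤ |c0| + |c1*w| + |c2*w^2| + |c3*w^3| + |c4*w^4| + |c5*w^5| := by
          gcongr; exact abs_add_le _ _
  simpa [abs_mul, abs_pow] using h1

lemma tendsto_polybound_atTop (c0 c1 c2 c3 c4 c5 : ℝ) :
    Tendsto (fun w : ℝ => (|c0| + |c1| * |w| + |c2| * |w|^2 + |c3| * |w|^3 + |c4| * |w|^4 + |c5| * |w|^5)
      * phi w) atTop (𝓝 0) := by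
  have h : Tendsto (fun w : ℝ => |c0| *(|w|^0*phi w) + |c1| *(|w|^1*phi w) + |c2| *(|w|^2*phi w)
      + |c3| *(|w|^3*phi w) + |c4| *(|w|^4*phi w) + |c5| *(|w|^5*phi w)) atTop
      (𝓝 (|c0| *0 + |c1| *0 + |c2| *0 + |c3| *0 + |c4| *0 + |c5| *0)) := by
    exact ((((((tendsto_abs_pow_phi_atTop 0).const_mul _).add
      ((tendsto_abs_pow_phi_atTop 1).const_mul _)).add
      ((tendsto_abs_pow_phi_atTop 2).const_mul _)).add
      ((tendsto_abs_pow_phi_atTop 3).const_mul _)).add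
      ((tendsto_abs_pow_phi_atTop 4).const_mul _)).add
      ((tendsto_abs_pow_phi_atTop 5).const_mul _)
  simp only [mul_zero, add_zero] at h
  exact h.congr (fun w => by ring)

lemma tendsto_polybound_atBot (c0 c1 c2 c3 c4 c5 : ℝ) :
    Tendsto (fun w : ℝ => (|c0| + |c1| * |w| + |c2| * |w|^2 + |c3| * |w|^3 + |c4| * |w|^4 + |c5| * |w|^5)
      * phi w) atBot (𝓝 0) := by
  have h : Tendsto (fun w : ℝ => |c0| *(|w|^0*phi w) + |c1| *(|w|^1*phi w) + |c2| *(|w|^2*phi w)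
      + |c3| *(|w|^3*phi w) + |c4| *(|w|^4*phi w) + |c5| *(|w|^5*phi w)) atBot
      (𝓝 (|c0| *0 + |c1| *0 + |c2| *0 + |c3| *0 + |c4| *0 + |c5| *0)) := by
    exact ((((((tendsto_abs_pow_phi_atBot 0).const_mul _).add
      ((tendsto_abs_pow_phi_atBot 1).const_mul _)).add
      ((tendsto_abs_pow_phi_atBot 2).const_mul _)).add
      ((tendsto_abs_pow_phi_atBot 3).const_mul _)).add
      ((tendsto_abs_pow_phi_atBot 4).const_mul _)).add
      ((tendsto_abs_pow_phi_atBot 5).const_mul _)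
  simp only [mul_zero, add_zero] at h
  exact h.congr (fun w => by ring)

set_option maxHeartbeats 2000000 in
lemma key (a β l : ℝ) :
    ∫ w : ℝ, ((1 - a*w - β*w^3)^2 + 1 - (2 + a^2 + 6*a*β + 15*β^2)) * (phi w * Phi (l * w))
      = -(l * ((2*a + 4*β) + 2*β/(1+l^2))) / (Real.sqrt (2*Real.pi) * Real.sqrt (1+l^2)) := by
  have hl2 : (0:ℝ) < 1 + l^2 := by positivity
  set r : ℝ := Real.sqrt (2*Real.pi) with hrdef
  set σ : ℝ := Real.sqrt (1+l^2) with hσdef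
  have hrpos : 0 < r := Real.sqrt_pos.2 (by positivity)
  have hσpos : 0 < σ := Real.sqrt_pos.2 hl2
  have hr0 : r ≠ 0 := ne_of_gt hrpos
  have hσ0 : σ ≠ 0 := ne_of_gt hσpos
  have hσ2 : σ^2 = 1 + l^2 := Real.sq_sqrt hl2.le
  set q0 : ℝ := 2*a + 4*β with hq0
  set q1 : ℝ := -(a^2 + 6*a*β + 15*β^2) with hq1
  set q2 : ℝ := 2*β with hq2
  set q3 : ℝ := -(2*a*β + 5*β^2) with hq3
  set q5 : ℝ := -(β^2) with hq5
  set k : ℝ := l / r with hk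
  set s4 : ℝ := k*q5/(1+l^2) with hs4
  set s2 : ℝ := k*(q3 + 4*q5/(1+l^2))/(1+l^2) with hs2
  set s1 : ℝ := k*q2/(1+l^2) with hs1
  set s0 : ℝ := (k*q1 + 2*s2)/(1+l^2) with hs0
  set cc : ℝ := -(l*(q0 + q2/(1+l^2)))/r with hcc
  set D : ℝ := 2 + a^2 + 6*a*β + 15*β^2 with hD
  set G : ℝ → ℝ := fun w => r⁻¹ * Real.exp (-(1+l^2)*w^2/2) with hGdef
  set H : ℝ → ℝ := fun w =>
      (q0 + q1*w + q2*w^2 + q3*w^3 + 0*w^4 + q5*w^5) * (phi w * Phi (l*w))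
      + (s0 + s1*w + s2*w^2 + 0*w^3 + s4*w^4 + 0*w^5) * G w
      + (cc/σ) * Phi (σ*w) with hHdef
  -- G facts
  have hG : ∀ w : ℝ, phi (σ * w) = G w := by
    intro w
    rw [hGdef]
    unfold phi
    rw [← hrdef, mul_pow, hσ2]
    ring_nf
  have hphiphi : ∀ w : ℝ, phi w * phi (l * w) = r⁻¹ * G w := by
    intro w
    have e : (-(w^2)/2) + (-((l*w)^2)/2) = -(1+l^2)*w^2/2 := by ring
    rw [hGdef]
    unfold phi
    rw [← hrdef]
    dsimp only
    rw [← e, Real.exp_add]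
    ring
  have hGderiv : ∀ w : ℝ, HasDerivAt G (-(1+l^2) * w * G w) w := by
    intro w
    have hinner : HasDerivAt (fun x : ℝ => -(1+l^2)*x^2/2) (-(1+l^2)*w) w := by
      have h := ((hasDerivAt_pow 2 w).const_mul (-(1+l^2))).div_const 2
      refine h.congr_deriv ?_
      norm_num
      ring
    have h2 := (hinner.exp).const_mul r⁻¹
    rw [hGdef]
    refine h2.congr_deriv ?_
    dsimp only
    ring
  have hGle : ∀ w : ℝ, |G w| ≤ phi w := by
    intro w
    rw [hGdef]
    dsimp only
    unfold phi
    rw [← hrdef, abs_of_nonneg (by positivity)]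
    have : Real.exp (-(1+l^2)*w^2/2) ≤ Real.exp (-w^2/2) := by
      apply Real.exp_le_exp.2
      nlinarith [sq_nonneg (l*w), sq_nonneg w, sq_nonneg l]
    have hrinv : (0:ℝ) ≤ r⁻¹ := by positivity
    nlinarith
  -- derivative of H
  have hderiv : ∀ w : ℝ, HasDerivAt H
      (((1 - a*w - β*w^3)^2 + 1 - D) * (phi w * Phi (l*w))) w := by
    intro w
    have hQ := hasDerivAt_poly q0 q1 q2 q3 0 q5 w
    have hS := hasDerivAt_poly s0 s1 s2 0 s4 0 w
    have hlinl : HasDerivAt (fun x : ℝ => l * x) l w := by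
      simpa using (hasDerivAt_id w).const_mul l
    have hlinσ : HasDerivAt (fun x : ℝ => σ * x) σ w := by
      simpa using (hasDerivAt_id w).const_mul σ
    have hPhil : HasDerivAt (fun x : ℝ => Phi (l*x)) (phi (l*w) * l) w := by
      exact (hasDerivAt_Phi (l*w)).comp w hlinl
    have hPhiσ : HasDerivAt (fun x : ℝ => Phi (σ*x)) (phi (σ*w) * σ) w := by
      exact (hasDerivAt_Phi (σ*w)).comp w hlinσ
    have hphiPhi : HasDerivAt (fun x : ℝ => phi x * Phi (l*x))
        ((-w * phi w) * Phi (l*w) + phi w * (phi (l*w) * l)) w :=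
      (hasDerivAt_phi w).mul hPhil
    have hraw := ((hQ.mul hphiPhi).add (hS.mul (hGderiv w))).add (hPhiσ.const_mul (cc/σ))
    rw [hHdef]
    refine hraw.congr_deriv ?_
    rw [hG w]
    have e2 : phi w * (phi (l*w) * l) = (r⁻¹ * G w) * l := by
      rw [← mul_assoc, hphiphi w]
    rw [e2]
    rw [hq0, hq1, hq2, hq3, hq5, hs0, hs1, hs2, hs4, hcc, hk, hD]
    field_simp
    ring
  -- integrability
  have hintP : Integrable (fun w : ℝ => ((1 - a*w - β*w^3)^2 + 1 - D) * phi w) := by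
    have heq : (fun w : ℝ => ((1 - a*w - β*w^3)^2 + 1 - D) * phi w)
        = fun w => (2-D)*(w^0*phi w) + (-2*a)*(w^1*phi w) + (a^2)*(w^2*phi w)
          + (-2*β)*(w^3*phi w) + (2*a*β)*(w^4*phi w) + (β^2)*(w^6*phi w) := by
      funext w; ring
    rw [heq]
    exact (((((((integrable_pow_phi 0).const_mul _).add
      ((integrable_pow_phi 1).const_mul _)).add
      ((integrable_pow_phi 2).const_mul _)).add
      ((integrable_pow_phi 3).const_mul _)).add
      ((integrable_pow_phi 4).const_mul _)).add
      ((integrable_pow_phi 6).const_mul _))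
  have hint : Integrable (fun w : ℝ => ((1 - a*w - β*w^3)^2 + 1 - D) * (phi w * Phi (l*w))) := by
    have := integrable_mul_Phi hintP l
    exact this.congr (Filter.Eventually.of_forall (fun w => by ring))
  -- bounds for squeeze
  have hb1 : ∀ w : ℝ, ‖(q0 + q1*w + q2*w^2 + q3*w^3 + 0*w^4 + q5*w^5) * (phi w * Phi (l*w))‖
      ≤ (|q0| + |q1| * |w| + |q2| * |w|^2 + |q3| * |w|^3 + |(0:ℝ)| * |w|^4 + |q5| * |w|^5) * phi w := by
    intro w
    rw [Real.norm_eq_abs, abs_mul]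
    have h2 : |phi w * Phi (l*w)| ≤ phi w := by
      rw [abs_of_nonneg (mul_nonneg (phi_nonneg _) (Phi_nonneg _))]
      exact mul_le_of_le_one_right (phi_nonneg w) (Phi_le_one _)
    exact mul_le_mul (abs_poly_le _ _ _ _ _ _ _) h2 (abs_nonneg _) (by positivity)
  have hb2 : ∀ w : ℝ, ‖(s0 + s1*w + s2*w^2 + 0*w^3 + s4*w^4 + 0*w^5) * G w‖
      ≤ (|s0| + |s1| * |w| + |s2| * |w|^2 + |(0:ℝ)| * |w|^3 + |s4| * |w|^4 + |(0:ℝ)| * |w|^5) * phi w := by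
    intro w
    rw [Real.norm_eq_abs, abs_mul]
    exact mul_le_mul (abs_poly_le _ _ _ _ _ _ _) (hGle w) (abs_nonneg _) (by positivity)
  have hT1top : Tendsto (fun w : ℝ =>
      (q0 + q1*w + q2*w^2 + q3*w^3 + 0*w^4 + q5*w^5) * (phi w * Phi (l*w))) atTop (𝓝 0) :=
    squeeze_zero_norm hb1 (tendsto_polybound_atTop q0 q1 q2 q3 0 q5)
  have hT1bot : Tendsto (fun w : ℝ =>
      (q0 + q1*w + q2*w^2 + q3*w^3 + 0*w^4 + q5*w^5) * (phi w * Phi (l*w))) atBot (𝓝 0) :=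
    squeeze_zero_norm hb1 (tendsto_polybound_atBot q0 q1 q2 q3 0 q5)
  have hT2top : Tendsto (fun w : ℝ =>
      (s0 + s1*w + s2*w^2 + 0*w^3 + s4*w^4 + 0*w^5) * G w) atTop (𝓝 0) :=
    squeeze_zero_norm hb2 (tendsto_polybound_atTop s0 s1 s2 0 s4 0)
  have hT2bot : Tendsto (fun w : ℝ =>
      (s0 + s1*w + s2*w^2 + 0*w^3 + s4*w^4 + 0*w^5) * G w) atBot (𝓝 0) :=
    squeeze_zero_norm hb2 (tendsto_polybound_atBot s0 s1 s2 0 s4 0)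
  have hσmul_top : Tendsto (fun w : ℝ => σ * w) atTop atTop :=
    Tendsto.const_mul_atTop hσpos tendsto_id
  have hσmul_bot : Tendsto (fun w : ℝ => σ * w) atBot atBot :=
    Tendsto.const_mul_atBot hσpos tendsto_id
  have hT3top : Tendsto (fun w : ℝ => (cc/σ) * Phi (σ*w)) atTop (𝓝 ((cc/σ) * 1)) :=
    tendsto_const_nhds.mul (tendsto_Phi_atTop.comp hσmul_top)
  have hT3bot : Tendsto (fun w : ℝ => (cc/σ) * Phi (σ*w)) atBot (𝓝 ((cc/σ) * 0)) :=
    tendsto_const_nhds.mul (tendsto_Phi_atBot.comp hσmul_bot)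
  have htop : Tendsto H atTop (𝓝 (cc/σ)) := by
    have := (hT1top.add hT2top).add hT3top
    rw [hHdef]
    convert this using 2
    ring
  have hbot : Tendsto H atBot (𝓝 0) := by
    have := (hT1bot.add hT2bot).add hT3bot
    rw [hHdef]
    convert this using 2
    ring
  have hFTC := integral_of_hasDerivAt_of_tendsto hderiv hint hbot htop
  rw [hFTC, sub_zero, hcc, div_div]

lemma bconst_eq : bconst = 2 / Real.sqrt (2 * Real.pi) := by
  rw [bconst, eq_div_iff (by positivity : Real.sqrt (2*Real.pi) ≠ 0)]
  rw [← Real.sqrt_mul (by positivity : (0:ℝ) ≤ 2/Real.pi)]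
  rw [show 2 / Real.pi * (2 * Real.pi) = 4 by field_simp; ring]
  rw [show (4:ℝ) = 2^2 by norm_num, Real.sqrt_sq (by norm_num : (0:ℝ) ≤ 2)]

lemma C_eq (a β l : ℝ) :
    C a β l = -(l * ((2*a + 4*β) + 2*β/(1+l^2))) / (Real.sqrt (2*Real.pi) * Real.sqrt (1+l^2))
      + (2 + a^2 + 6*a*β + 15*β^2) / 2 := by
  have hl2 : (0:ℝ) < 1 + l^2 := by positivity
  have hr : (0:ℝ) < Real.sqrt (2*Real.pi) := Real.sqrt_pos.2 (by positivity)
  have hσ : (0:ℝ) < Real.sqrt (1+l^2) := Real.sqrt_pos.2 hl2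
  rw [C, bconst_eq, del]
  rw [show (1 + l^2 : ℝ) = 1 + l^2 by norm_num]
  field_simp
  ring

lemma integral_g_Phi (a β l : ℝ) :
    ∫ w : ℝ, g a β w * Phi (l * w) = C a β l / (2 + a^2 + 6*a*β + 15*β^2) := by
  set D : ℝ := 2 + a^2 + 6*a*β + 15*β^2 with hD
  have hP1 : Integrable (fun w : ℝ => ((1 - a*w - β*w^3)^2 + 1 - D) * phi w) := by
    have heq : (fun w : ℝ => ((1 - a*w - β*w^3)^2 + 1 - D) * phi w)
        = fun w => (2-D)*(w^0*phi w) + (-2*a)*(w^1*phi w) + (a^2)*(w^2*phi w)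
          + (-2*β)*(w^3*phi w) + (2*a*β)*(w^4*phi w) + (β^2)*(w^6*phi w) := by
      funext w; ring
    rw [heq]
    exact (((((((integrable_pow_phi 0).const_mul _).add
      ((integrable_pow_phi 1).const_mul _)).add
      ((integrable_pow_phi 2).const_mul _)).add
      ((integrable_pow_phi 3).const_mul _)).add
      ((integrable_pow_phi 4).const_mul _)).add
      ((integrable_pow_phi 6).const_mul _))
  have hint1 : Integrable (fun w : ℝ => ((1 - a*w - β*w^3)^2 + 1 - D) * (phi w * Phi (l*w))) :=
    (integrable_mul_Phi hP1 l).congr (Filter.Eventually.of_forall (fun w => by ring))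
  have hintphiPhi : Integrable (fun w : ℝ => phi w * Phi (l*w)) := by
    have := integrable_mul_Phi (p := fun _ => (1:ℝ)) (by simpa using integrable_phi) l
    simpa using this
  have hsplit : (fun w : ℝ => g a β w * Phi (l * w))
      = fun w => (((1 - a*w - β*w^3)^2 + 1 - D) * (phi w * Phi (l*w))
        + D * (phi w * Phi (l*w))) / D := by
    funext w
    rw [g, ← hD]
    ring
  rw [hsplit]
  rw [integral_div]
  rw [integral_add hint1 (hintphiPhi.const_mul D)]
  rw [key a β l, integral_const_mul, integral_phi_mul_Phi]
  rw [C_eq, ← hD]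
  ring

theorem stmt_18 (a β l : ℝ) (z : ℝ) :
    g a β z * Phi (l * z) / (∫ w : ℝ, g a β w * Phi (l * w)) = f a β l z := by
  have hD : (0:ℝ) < 2 + a^2 + 6*a*β + 15*β^2 := by nlinarith [sq_nonneg (a + 3*β), sq_nonneg β]
  rw [integral_g_Phi, g, f]
  set D : ℝ := 2 + a^2 + 6*a*β + 15*β^2 with hDdef
  rw [div_mul_eq_mul_div, div_div_div_comm, div_self (ne_of_gt hD), div_one]
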